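/- Let G be an (n+1)×(n+1) real matrix, let j : Fin (n+1), and let G̃ := G.submatrix (Fin.succAbove j) (Fin.succAbove j). Let ω be a real number such that both iω·I − G and iω·I − G̃ (cast to ℂ entrywise) are invertible, let c > 0, and define S := c·( ω²·I − iω·(Gᵀ − G) + Gᵀ·G )⁻¹ and S̃ := c·( ω²·I − iω·(G̃ᵀ − G̃) + G̃ᵀ·G̃ )⁻¹ over ℂ. Then for every k : Fin n, |G j (j.succAbove k)| = Real.sqrt( c·( [Re(S⁻¹)] (j.succAbove k) (j.succAbove k) − [Re(S̃⁻¹)] k k ) ). -/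

import Mathlib

open Matrix

lemma key_inv_re (m : ℕ) (G : Matrix (Fin m) (Fin m) ℝ) (ω c : ℝ) (hc : c ≠ 0)
    (hinv : IsUnit ((Complex.I * ω) • (1 : Matrix (Fin m) (Fin m) ℂ) - G.map Complex.ofReal))
    (i : Fin m) :
    ((((c : ℂ) • (((ω : ℂ) ^ 2) • (1 : Matrix (Fin m) (Fin m) ℂ) -
        (Complex.I * ω) • ((G.map Complex.ofReal)ᵀ - G.map Complex.ofReal) +
        (G.map Complex.ofReal)ᵀ * G.map Complex.ofReal)⁻¹)⁻¹) i i).re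
      = c⁻¹ * (ω ^ 2 + ∑ l, G l i ^ 2) := by
  set Q : Matrix (Fin m) (Fin m) ℂ := G.map Complex.ofReal with hQ
  set P : Matrix (Fin m) (Fin m) ℂ := Qᵀ with hP
  set A : Matrix (Fin m) (Fin m) ℂ :=
    (Complex.I * ω) • (1 : Matrix (Fin m) (Fin m) ℂ) - Q with hA
  set M : Matrix (Fin m) (Fin m) ℂ :=
    ((ω : ℂ) ^ 2) • (1 : Matrix (Fin m) (Fin m) ℂ) - (Complex.I * ω) • (P - Q) + P * Q with hM
  have hstar : star (Complex.I * (ω : ℂ)) = -(Complex.I * ω) := by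
    simp [Complex.ext_iff]
  have hB : Aᴴ = (-(Complex.I * ω)) • (1 : Matrix (Fin m) (Fin m) ℂ) - P := by
    rw [hA, conjTranspose_sub, conjTranspose_smul, conjTranspose_one, hstar]
    congr 1
    ext a b
    simp [hP, hQ, conjTranspose_apply, Matrix.map_apply]
  have hBA : Aᴴ * A = M := by
    rw [hB, hA, hM]
    rw [sub_mul, mul_sub, mul_sub, smul_mul_assoc, smul_mul_assoc, one_mul,
      mul_smul_comm, mul_one, smul_smul, smul_sub]
    have h1 : (-(Complex.I * ω)) * (Complex.I * ω) = (ω : ℂ) ^ 2 := by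
      ring_nf; rw [Complex.I_sq]; ring
    rw [h1, neg_smul]
    simp only [one_mul]
    abel
  have hAdet : IsUnit A.det := (isUnit_iff_isUnit_det _).mp hinv
  have hMunit : IsUnit M.det := by
    rw [← hBA, det_mul, det_conjTranspose]
    exact hAdet.star.mul hAdet
  have hSinv : ((c : ℂ) • M⁻¹)⁻¹ = (c : ℂ)⁻¹ • M := by
    apply inv_eq_right_inv
    rw [smul_mul_assoc, mul_smul_comm, smul_smul, nonsing_inv_mul M hMunit,
      mul_inv_cancel₀ (by exact_mod_cast hc), one_smul]
  have hMii : M i i = ((ω ^ 2 + ∑ l, G l i ^ 2 : ℝ) : ℂ) := by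
    simp [hM, Matrix.add_apply, Matrix.sub_apply, Matrix.smul_apply, Matrix.one_apply_eq,
      Matrix.mul_apply, hP, hQ, Matrix.transpose_apply, Matrix.map_apply]
    ring
  rw [hSinv]
  rw [Matrix.smul_apply, hMii, smul_eq_mul, ← Complex.ofReal_inv, ← Complex.ofReal_mul,
    Complex.ofReal_re]

theorem boolean_reconstruction_general_dynamics (n : ℕ)
    (G : Matrix (Fin (n + 1)) (Fin (n + 1)) ℝ) (j : Fin (n + 1))
    (Gt : Matrix (Fin n) (Fin n) ℝ) (hGt : Gt = G.submatrix j.succAbove j.succAbove)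
    (ω : ℝ)
    (hinv : IsUnit ((Complex.I * ω) • (1 : Matrix (Fin (n + 1)) (Fin (n + 1)) ℂ) -
        G.map Complex.ofReal))
    (hinvt : IsUnit ((Complex.I * ω) • (1 : Matrix (Fin n) (Fin n) ℂ) - Gt.map Complex.ofReal))
    (c : ℝ) (hc : 0 < c)
    (S : Matrix (Fin (n + 1)) (Fin (n + 1)) ℂ)
    (hS : S = (c : ℂ) • (((ω : ℂ) ^ 2) • (1 : Matrix (Fin (n + 1)) (Fin (n + 1)) ℂ) -
        (Complex.I * ω) • ((G.map Complex.ofReal)ᵀ - G.map Complex.ofReal) +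
        (G.map Complex.ofReal)ᵀ * G.map Complex.ofReal)⁻¹)
    (St : Matrix (Fin n) (Fin n) ℂ)
    (hSt : St = (c : ℂ) • (((ω : ℂ) ^ 2) • (1 : Matrix (Fin n) (Fin n) ℂ) -
        (Complex.I * ω) • ((Gt.map Complex.ofReal)ᵀ - Gt.map Complex.ofReal) +
        (Gt.map Complex.ofReal)ᵀ * Gt.map Complex.ofReal)⁻¹) :
    ∀ k : Fin n,
      |G j (j.succAbove k)| =
        Real.sqrt (c * ((S⁻¹ (j.succAbove k) (j.succAbove k)).re - (St⁻¹ k k).re)) := by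
  intro k
  subst hS hSt
  have h1 := key_inv_re (n + 1) G ω c hc.ne' hinv (j.succAbove k)
  have h2 := key_inv_re n Gt ω c hc.ne' hinvt k
  rw [h1, h2]
  have hsum : ∑ l, G l (j.succAbove k) ^ 2
      = G j (j.succAbove k) ^ 2 + ∑ l, Gt l k ^ 2 := by
    subst hGt
    rw [Fin.sum_univ_succAbove (fun l => G l (j.succAbove k) ^ 2) j]
    rfl
  rw [hsum]
  have : c * (c⁻¹ * (ω ^ 2 + (G j (j.succAbove k) ^ 2 + ∑ l, Gt l k ^ 2)) -
      c⁻¹ * (ω ^ 2 + ∑ l, Gt l k ^ 2)) = G j (j.succAbove k) ^ 2 := by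
    field_simp
    ring
  rw [this, Real.sqrt_sq_eq_abs]
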